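/- If P is a discrete strongly connected poset, then P admits an R-grading for some subset R of the integers; consequently, the antichain cutsets of a discrete strongly connected poset are exactly the level sets of this grading. -/

import Mathlib

set_option linter.unusedSectionVars false
set_option linter.unusedTactic false
set_option linter.unreachableTactic false

/-- An antichain cutset: a set intersecting each maximal chain in exactly one element. -/
def IsAntichainCutset {α : Type*} [PartialOrder α] (A : Set α) : Prop :=
  ∀ c : Set α, IsMaxChain (· ≤ ·) c → ∃! x, x ∈ c ∧ x ∈ A

/-- A poset is strongly connected if any two maximal chains are connected by a finite
sequence of maximal chains in which consecutive chains have symmetric difference of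
cardinality two. -/
def StronglyConnectedOrder (α : Type*) [PartialOrder α] : Prop :=
  ∀ c d : Set α, IsMaxChain (· ≤ ·) c → IsMaxChain (· ≤ ·) d →
    ∃ (n : ℕ) (f : ℕ → Set α), f 0 = c ∧ f n = d ∧
      (∀ i ≤ n, IsMaxChain (· ≤ ·) (f i)) ∧
      ∀ i < n, (symmDiff (f i) (f (i + 1))).ncard = 2

/-- A poset is discrete if every closed interval has a maximal chain of finite length. -/
def DiscretePoset (α : Type*) [PartialOrder α] : Prop :=
  ∀ a b : α, a ≤ b → ∃ c : Set (Set.Icc a b), IsMaxChain (· ≤ ·) c ∧ c.Finite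

namespace DSCG

open scoped Classical

variable {α : Type*} [PartialOrder α]

lemma fin_exists_minimal_wrt {β : Type*} (f : β → α) (s : Set β) (h : s.Finite) (hs : s.Nonempty) :
    ∃ a ∈ s, ∀ a' ∈ s, f a' ≤ f a → f a = f a' := by
  obtain ⟨a, ha, hmin⟩ := Set.Finite.exists_minimalFor f s h hs
  exact ⟨a, ha, fun a' ha' hle => le_antisymm (hmin ha' hle) hle⟩

lemma fin_exists_maximal_wrt {β : Type*} (f : β → α) (s : Set β) (h : s.Finite) (hs : s.Nonempty) :
    ∃ a ∈ s, ∀ a' ∈ s, f a ≤ f a' → f a = f a' := by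
  obtain ⟨a, ha, hmax⟩ := Set.Finite.exists_maximalFor f s h hs
  exact ⟨a, ha, fun a' ha' hle => le_antisymm hle (hmax ha' hle)⟩

lemma chain_cmp {c : Set α} (hc : IsChain (· ≤ ·) c) {z w : α} (hz : z ∈ c) (hw : w ∈ c) :
    z ≤ w ∨ w ≤ z := by
  rcases eq_or_ne z w with rfl | h
  · exact Or.inl le_rfl
  · exact hc hz hw h

lemma mem_of_comp {c : Set α} (hc : IsMaxChain (· ≤ ·) c) {a : α}
    (h : ∀ z ∈ c, a ≤ z ∨ z ≤ a) : a ∈ c := by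
  have hch : IsChain (· ≤ ·) (insert a c) := hc.1.insert (fun z hz _ => h z hz)
  have := hc.2 hch (Set.subset_insert a c)
  rw [this]; exact Set.mem_insert a c

structure SwapData (c c' : Set α) (x y : α) : Prop where
  hx : x ∈ c
  hx' : x ∉ c'
  hy : y ∈ c'
  hy' : y ∉ c
  hcd : c \ c' = {x}
  hdc : c' \ c = {y}
  hxy : ¬ x ≤ y
  hyx : ¬ y ≤ x
  cutle : ∀ z ∈ c, z ≠ x → (z ≤ x ↔ z ≤ y)
  cutge : ∀ z ∈ c, z ≠ x → (x ≤ z ↔ y ≤ z)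

lemma SwapData.mem_of {c c' : Set α} {x y : α} (h : SwapData c c' x y) {z : α}
    (hz : z ∈ c) (hzx : z ≠ x) : z ∈ c' := by
  by_contra hz'
  have : z ∈ c \ c' := ⟨hz, hz'⟩
  rw [h.hcd] at this
  exact hzx this

lemma SwapData.mem_iff {c c' : Set α} {x y : α} (h : SwapData c c' x y) {z : α} :
    z ∈ c' ↔ z = y ∨ (z ∈ c ∧ z ≠ x) := by
  constructor
  · intro hz
    rcases eq_or_ne z y with rfl | hne
    · exact Or.inl rfl
    · refine Or.inr ⟨?_, ?_⟩
      · by_contra hzc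
        have : z ∈ c' \ c := ⟨hz, hzc⟩
        rw [h.hdc] at this; exact hne this
      · rintro rfl; exact h.hx' hz
  · rintro (rfl | ⟨hz, hzx⟩)
    · exact h.hy
    · exact h.mem_of hz hzx

lemma swap_spec {c c' : Set α} (hc : IsMaxChain (· ≤ ·) c) (hc' : IsMaxChain (· ≤ ·) c')
    (hn : (symmDiff c c').ncard = 2) : ∃ x y, SwapData c c' x y := by
  have hfin : (symmDiff c c').Finite := by
    rcases (symmDiff c c').finite_or_infinite with h | h
    · exact h
    · rw [h.ncard] at hn; omega
  rw [Set.symmDiff_def] at hn hfin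
  have hfin1 : (c \ c').Finite := hfin.subset Set.subset_union_left
  have hfin2 : (c' \ c).Finite := hfin.subset Set.subset_union_right
  have hdisj : Disjoint (c \ c') (c' \ c) := disjoint_sdiff_sdiff
  have hne1 : (c \ c').Nonempty := by
    rw [Set.nonempty_iff_ne_empty]
    intro hemp
    have hsub : c ⊆ c' := by rwa [Set.diff_eq_empty] at hemp
    have : c = c' := hc.2 hc'.1 hsub
    rw [this] at hn
    simp [Set.diff_self] at hn
  have hne2 : (c' \ c).Nonempty := by
    rw [Set.nonempty_iff_ne_empty]
    intro hemp
    have hsub : c' ⊆ c := by rwa [Set.diff_eq_empty] at hemp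
    have : c' = c := hc'.2 hc.1 hsub
    rw [this] at hn
    simp [Set.diff_self] at hn
  have hcard : (c \ c').ncard + (c' \ c).ncard = 2 := by
    rw [← Set.ncard_union_eq hdisj hfin1 hfin2]; exact hn
  have h1 : (c \ c').ncard = 1 := by
    have g1 : 1 ≤ (c \ c').ncard := (Set.ncard_pos hfin1).mpr hne1
    have g2 : 1 ≤ (c' \ c).ncard := (Set.ncard_pos hfin2).mpr hne2
    omega
  have h2 : (c' \ c).ncard = 1 := by omega
  obtain ⟨x, hxs⟩ := Set.ncard_eq_one.mp h1
  obtain ⟨y, hys⟩ := Set.ncard_eq_one.mp h2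
  have hx : x ∈ c ∧ x ∉ c' := by
    have hh : x ∈ c \ c' := by rw [hxs]; exact rfl
    exact hh
  have hy : y ∈ c' ∧ y ∉ c := by
    have hh : y ∈ c' \ c := by rw [hys]; exact rfl
    exact hh
  have memof : ∀ z ∈ c, z ≠ x → z ∈ c' := by
    intro z hz hzx
    by_contra hz'
    have : z ∈ c \ c' := ⟨hz, hz'⟩
    rw [hxs] at this
    exact hzx this
  -- x and y are incomparable
  have hincomp : ¬ x ≤ y ∧ ¬ y ≤ x := by
    have key : ∀ z ∈ c, z ≠ x → y ≤ z ∨ z ≤ y := by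
      intro z hz hzx
      exact chain_cmp hc'.1 hy.1 (memof z hz hzx)
    constructor
    all_goals
      intro hcmp
      have hch : y ∈ c := mem_of_comp hc (by
        intro z hz
        rcases eq_or_ne z x with rfl | hzx
        · first
            | exact Or.inr hcmp
            | exact Or.inl hcmp
        · exact key z hz hzx)
      exact hy.2 hch
  have cut1 : ∀ z ∈ c, z ≠ x → (z ≤ x ↔ z ≤ y) := by
    intro z hz hzx
    have hz' := memof z hz hzx
    constructor
    · intro h
      rcases chain_cmp hc'.1 hz' hy.1 with h' | h'
      · exact h'
      · exact absurd (h'.trans h) hincomp.2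
    · intro h
      rcases chain_cmp hc.1 hz hx.1 with h' | h'
      · exact h'
      · exact absurd (h'.trans h) hincomp.1
  have cut2 : ∀ z ∈ c, z ≠ x → (x ≤ z ↔ y ≤ z) := by
    intro z hz hzx
    have hz' := memof z hz hzx
    constructor
    · intro h
      rcases chain_cmp hc'.1 hz' hy.1 with h' | h'
      · exact absurd (h.trans h') hincomp.1
      · exact h'
    · intro h
      rcases chain_cmp hc.1 hz hx.1 with h' | h'
      · exact absurd (h.trans h') hincomp.2
      · exact h'
  exact ⟨x, y, ⟨hx.1, hx.2, hy.1, hy.2, hxs, hys, hincomp.1, hincomp.2, cut1, cut2⟩⟩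

lemma SwapData.symm {c c' : Set α} {x y : α} (h : SwapData c c' x y) : SwapData c' c y x := by
  refine ⟨h.hy, h.hy', h.hx, h.hx', h.hdc, h.hcd, h.hyx, h.hxy, ?_, ?_⟩
  · intro z hz hzy
    rcases h.mem_iff.mp hz with rfl | ⟨hzc, hzx⟩
    · exact absurd rfl hzy
    · exact (h.cutle z hzc hzx).symm
  · intro z hz hzy
    rcases h.mem_iff.mp hz with rfl | ⟨hzc, hzx⟩
    · exact absurd rfl hzy
    · exact (h.cutge z hzc hzx).symm

lemma exists_exit {f : ℕ → Set α} {z : α} :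
    ∀ n, z ∈ f 0 → z ∉ f n → ∃ i < n, z ∈ f i ∧ z ∉ f (i + 1) := by
  intro n
  induction n with
  | zero => intro h0 hn; exact absurd h0 hn
  | succ m ih =>
    intro h0 hn
    by_cases hm : z ∈ f m
    · exact ⟨m, Nat.lt_succ_self m, hm, hn⟩
    · obtain ⟨i, hi, h⟩ := ih h0 hm
      exact ⟨i, hi.trans (Nat.lt_succ_self m), h⟩

lemma symmdiff_finite {c c' : Set α} (hn : (symmDiff c c').ncard = 2) : (symmDiff c c').Finite := by
  rcases (symmDiff c c').finite_or_infinite with h | h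
  · exact h
  · rw [h.ncard] at hn; omega

variable (hd : DiscretePoset α) (hsc : StronglyConnectedOrder α)

include hd hsc in
lemma finite_trace {c : Set α} {a b : α} (hc : IsMaxChain (· ≤ ·) c) (hab : a ≤ b) :
    (c ∩ Set.Icc a b).Finite := by
  obtain ⟨cs, hcs, hcsfin⟩ := hd a b hab
  set f : Set α := Subtype.val '' cs with hf
  have hffin : f.Finite := hcsfin.image _
  have hfchain : IsChain (· ≤ ·) f := by
    rintro _ ⟨u, hu, rfl⟩ _ ⟨v, hv, rfl⟩ hne
    have : u ≠ v := fun e => hne (by rw [e])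
    exact hcs.1 hu hv this
  have hfsub : f ⊆ Set.Icc a b := by rintro _ ⟨u, _, rfl⟩; exact u.2
  -- maximality of f inside Icc a b
  have hfmax : ∀ z ∈ Set.Icc a b, (∀ w ∈ f, z ≤ w ∨ w ≤ z) → z ∈ f := by
    intro z hz hcomp
    have : (⟨z, hz⟩ : Set.Icc a b) ∈ cs := by
      apply mem_of_comp hcs
      intro w hw
      have := hcomp w.1 ⟨w, hw, rfl⟩
      rcases this with h | h
      · exact Or.inl (by exact_mod_cast h)
      · exact Or.inr (by exact_mod_cast h)
    exact ⟨⟨z, hz⟩, this, rfl⟩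
  obtain ⟨dd, hdd, hfd⟩ := hfchain.exists_maxChain
  have hddIcc : dd ∩ Set.Icc a b ⊆ f := by
    rintro z ⟨hzd, hzab⟩
    apply hfmax z hzab
    intro w hw
    exact chain_cmp hdd.1 hzd (hfd hw)
  obtain ⟨n, fp, hf0, hfn, hmc, hsw⟩ := hsc c dd hc hdd
  have hdifffin : (c \ dd).Finite := by
    have hsubU : c \ dd ⊆ ⋃ i ∈ Finset.range n, (fp i \ fp (i + 1)) := by
      rintro z ⟨hzc, hzd⟩
      obtain ⟨i, hi, hin, hout⟩ := exists_exit n (hf0 ▸ hzc) (hfn ▸ hzd)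
      exact Set.mem_biUnion (Finset.mem_range.mpr hi) ⟨hin, hout⟩
    apply Set.Finite.subset _ hsubU
    apply Set.Finite.biUnion (Finset.range n).finite_toSet
    intro i hi
    have := symmdiff_finite (hsw i (Finset.mem_range.mp (by exact_mod_cast hi)))
    rw [Set.symmDiff_def] at this
    exact (this.subset Set.subset_union_left)
  have : c ∩ Set.Icc a b ⊆ (c \ dd) ∪ f := by
    rintro z ⟨hzc, hzab⟩
    by_cases hzd : z ∈ dd
    · exact Or.inr (hddIcc ⟨hzd, hzab⟩)
    · exact Or.inl ⟨hzc, hzd⟩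
  exact Set.Finite.subset (hdifffin.union hffin) this

/-- interval count within a chain -/
noncomputable def mQ (c : Set α) (a b : α) : ℕ := (c ∩ Set.Icc a b).ncard

lemma mem_trace {c : Set α} {a b : α} (ha : a ∈ c) (hab : a ≤ b) : a ∈ c ∩ Set.Icc a b :=
  ⟨ha, le_refl a, hab⟩

lemma mem_trace' {c : Set α} {a b : α} (hb : b ∈ c) (hab : a ≤ b) : b ∈ c ∩ Set.Icc a b :=
  ⟨hb, hab, le_refl b⟩

include hd hsc in
lemma mQ_pos {c : Set α} {a b : α} (hc : IsMaxChain (· ≤ ·) c) (ha : a ∈ c) (hab : a ≤ b) :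
    1 ≤ mQ c a b :=
  (Set.ncard_pos (finite_trace hd hsc hc hab)).mpr ⟨a, mem_trace ha hab⟩

include hd hsc in
lemma mQ_two {c : Set α} {a b : α} (hc : IsMaxChain (· ≤ ·) c) (ha : a ∈ c) (hb : b ∈ c)
    (hab : a ≤ b) (hne : a ≠ b) : 2 ≤ mQ c a b := by
  have hsub : ({a, b} : Set α) ⊆ c ∩ Set.Icc a b := by
    rintro z (rfl | rfl)
    · exact mem_trace ha hab
    · exact mem_trace' hb hab
  calc 2 = ({a, b} : Set α).ncard := (Set.ncard_pair hne).symm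
    _ ≤ mQ c a b := Set.ncard_le_ncard hsub (finite_trace hd hsc hc hab)

lemma mQ_eq_one {c : Set α} {a b : α} (ha : a ∈ c) (hb : b ∈ c) (hab : a ≤ b)
    (h : mQ c a b = 1) : a = b := by
  obtain ⟨w, hw⟩ := Set.ncard_eq_one.mp h
  have h1 : a ∈ c ∩ Set.Icc a b := mem_trace ha hab
  have h2 : b ∈ c ∩ Set.Icc a b := mem_trace' hb hab
  rw [hw] at h1 h2
  rw [h1, h2]

include hd hsc in
lemma mQ_add {c : Set α} {a b e : α} (hc : IsMaxChain (· ≤ ·) c) (hb : b ∈ c)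
    (hab : a ≤ b) (hbe : b ≤ e) :
    mQ c a e + 1 = mQ c a b + mQ c b e := by
  have hU : (c ∩ Set.Icc a b) ∪ (c ∩ Set.Icc b e) = c ∩ Set.Icc a e := by
    ext z
    constructor
    · rintro (⟨hz, h1, h2⟩ | ⟨hz, h1, h2⟩)
      · exact ⟨hz, h1, h2.trans hbe⟩
      · exact ⟨hz, hab.trans h1, h2⟩
    · rintro ⟨hz, h1, h2⟩
      rcases chain_cmp hc.1 hz hb with h | h
      · exact Or.inl ⟨hz, h1, h⟩
      · exact Or.inr ⟨hz, h, h2⟩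
  have hI : (c ∩ Set.Icc a b) ∩ (c ∩ Set.Icc b e) = {b} := by
    ext z
    constructor
    · rintro ⟨⟨_, _, h2⟩, ⟨_, h3, _⟩⟩
      exact le_antisymm h2 h3
    · rintro rfl
      exact ⟨mem_trace' hb hab, mem_trace hb hbe⟩
  have := Set.ncard_union_add_ncard_inter (c ∩ Set.Icc a b) (c ∩ Set.Icc b e)
    (finite_trace hd hsc hc hab) (finite_trace hd hsc hc hbe)
  rw [hU, hI, Set.ncard_singleton] at this
  exact this

include hd hsc in
lemma mQ_uniq_lower {c : Set α} {u v w : α} (hc : IsMaxChain (· ≤ ·) c) (hu : u ∈ c)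
    (hv : v ∈ c) (hw : w ∈ c) (huv : u ≤ v) (huw : u ≤ w) (h : mQ c u v = mQ c u w) :
    v = w := by
  rcases chain_cmp hc.1 hv hw with hvw | hvw
  · have := mQ_add hd hsc hc hv huv hvw
    have h1 : mQ c v w = 1 := by omega
    exact mQ_eq_one hv hw hvw h1
  · have := mQ_add hd hsc hc hw huw hvw
    have h1 : mQ c w v = 1 := by omega
    exact (mQ_eq_one hw hv hvw h1).symm

include hd hsc in
lemma mQ_uniq_upper {c : Set α} {u v w : α} (hc : IsMaxChain (· ≤ ·) c) (hu : u ∈ c)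
    (hv : v ∈ c) (hw : w ∈ c) (hvu : v ≤ u) (hwu : w ≤ u) (h : mQ c v u = mQ c w u) :
    v = w := by
  rcases chain_cmp hc.1 hv hw with hvw | hvw
  · have := mQ_add hd hsc hc hw hvw hwu
    have h1 : mQ c v w = 1 := by omega
    exact mQ_eq_one hv hw hvw h1
  · have := mQ_add hd hsc hc hv hvw hvu
    have h1 : mQ c w v = 1 := by omega
    exact (mQ_eq_one hw hv hvw h1).symm

/-- move an element across a swap -/
noncomputable def stepEl (c c' : Set α) (z : α) : α :=
  if z ∈ c' then z else if h : (c' \ c).Nonempty then h.some else z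

omit hd hsc

lemma stepEl_id {c c' : Set α} {z : α} (hz : z ∈ c') : stepEl c c' z = z := by
  unfold stepEl; rw [if_pos hz]

lemma stepEl_eq {c c' : Set α} {x y : α} (h : SwapData c c' x y) {z : α} (hz : z ∈ c) :
    stepEl c c' z = if z = x then y else z := by
  have huniq : ∀ w ∈ c' \ c, w = y := by intro w hw; rwa [h.hdc] at hw
  by_cases hzx : z = x
  · rw [if_pos hzx]
    unfold stepEl
    rw [if_neg (hzx ▸ h.hx')]
    have hne : (c' \ c).Nonempty := ⟨y, by rw [h.hdc]; exact rfl⟩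
    rw [dif_pos hne]
    exact huniq _ hne.some_mem
  · rw [if_neg hzx]
    exact stepEl_id (h.mem_of hz hzx)

lemma stepEl_mem {c c' : Set α} {x y : α} (h : SwapData c c' x y) {z : α} (hz : z ∈ c) :
    stepEl c c' z ∈ c' := by
  rw [stepEl_eq h hz]
  by_cases hzx : z = x
  · rw [if_pos hzx]; exact h.hy
  · rw [if_neg hzx]; exact h.mem_of hz hzx

lemma stepEl_inv {c c' : Set α} {x y : α} (h : SwapData c c' x y) {z : α} (hz : z ∈ c) :
    stepEl c' c (stepEl c c' z) = z := by
  rw [stepEl_eq h hz]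
  by_cases hzx : z = x
  · rw [if_pos hzx, stepEl_eq h.symm h.hy, if_pos rfl, hzx]
  · rw [if_neg hzx]
    exact stepEl_id hz

lemma stepEl_le_iff {c c' : Set α} {x y : α} (h : SwapData c c' x y) {z w : α}
    (hz : z ∈ c) (hw : w ∈ c) : z ≤ w ↔ stepEl c c' z ≤ stepEl c c' w := by
  rw [stepEl_eq h hz, stepEl_eq h hw]
  by_cases hzx : z = x <;> by_cases hwx : w = x
  · rw [if_pos hzx, if_pos hwx, hzx, hwx]
    simp
  · rw [if_pos hzx, if_neg hwx, hzx]
    exact h.cutge w hw hwx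
  · rw [if_neg hzx, if_pos hwx, hwx]
    exact h.cutle z hz hzx
  · rw [if_neg hzx, if_neg hwx]

lemma stepEl_inj {c c' : Set α} {x y : α} (h : SwapData c c' x y) {z w : α}
    (hz : z ∈ c) (hw : w ∈ c) (he : stepEl c c' z = stepEl c c' w) : z = w := by
  rw [stepEl_eq h hz, stepEl_eq h hw] at he
  by_cases hzx : z = x <;> by_cases hwx : w = x
  · rw [hzx, hwx]
  · rw [if_pos hzx, if_neg hwx] at he
    exact absurd (he ▸ hw) h.hy'
  · rw [if_neg hzx, if_pos hwx] at he
    exact absurd (he.symm ▸ hz) h.hy'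
  · rwa [if_neg hzx, if_neg hwx] at he

lemma ncard_swap_insert {S : Set α} (hfin : S.Finite) {x y : α} (hx : x ∈ S) (hy : y ∉ S) :
    (insert y (S \ {x})).ncard = S.ncard := by
  rw [Set.ncard_insert_of_notMem (fun hm => hy hm.1) (hfin.diff (t := {x}))]
  exact Set.ncard_diff_singleton_add_one hx hfin

lemma trace_self {c : Set α} {x : α} (hx : x ∈ c) : c ∩ Set.Icc x x = {x} := by
  ext t
  constructor
  · rintro ⟨_, h1, h2⟩
    exact le_antisymm h2 h1
  · rintro rfl
    exact ⟨hx, le_refl t, le_refl t⟩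

include hd hsc in
lemma stepEl_mQ {c c' : Set α} (hc : IsMaxChain (· ≤ ·) c) (hc' : IsMaxChain (· ≤ ·) c')
    {x y : α} (h : SwapData c c' x y) {z w : α} (hz : z ∈ c) (hw : w ∈ c) (hzw : z ≤ w) :
    mQ c' (stepEl c c' z) (stepEl c c' w) = mQ c z w := by
  rw [stepEl_eq h hz, stepEl_eq h hw]
  by_cases hzx : z = x <;> by_cases hwx : w = x
  · rw [if_pos hzx, if_pos hwx, hzx, hwx]
    unfold mQ
    rw [trace_self h.hx, trace_self h.hy]
    rw [Set.ncard_singleton, Set.ncard_singleton]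
  · -- z = x ≤ w
    rw [if_pos hzx, if_neg hwx]
    subst hzx
    have hset : c' ∩ Set.Icc y w = insert y ((c ∩ Set.Icc z w) \ {z}) := by
      ext t
      constructor
      · rintro ⟨ht', hyt, htw⟩
        rcases h.mem_iff.mp ht' with rfl | ⟨htc, htx⟩
        · exact Set.mem_insert _ _
        · exact Set.mem_insert_of_mem _ ⟨⟨htc, (h.cutge t htc htx).mpr hyt, htw⟩, htx⟩
      · rintro (rfl | ⟨⟨htc, hxt, htw⟩, htx⟩)
        · exact ⟨h.hy, le_refl t, (h.cutge w hw hwx).mp hzw⟩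
        · exact ⟨h.mem_of htc htx, (h.cutge t htc htx).mp hxt, htw⟩
    unfold mQ
    rw [hset]
    exact ncard_swap_insert (finite_trace hd hsc hc hzw) (mem_trace h.hx hzw) (fun hm => h.hy' hm.1)
  · -- z ≤ w = x
    rw [if_neg hzx, if_pos hwx]
    subst hwx
    have hset : c' ∩ Set.Icc z y = insert y ((c ∩ Set.Icc z w) \ {w}) := by
      ext t
      constructor
      · rintro ⟨ht', hzt, hty⟩
        rcases h.mem_iff.mp ht' with rfl | ⟨htc, htx⟩
        · exact Set.mem_insert _ _
        · exact Set.mem_insert_of_mem _ ⟨⟨htc, hzt, (h.cutle t htc htx).mpr hty⟩, htx⟩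
      · rintro (rfl | ⟨⟨htc, hzt, htw⟩, htx⟩)
        · exact ⟨h.hy, (h.cutle z hz hzx).mp hzw, le_refl t⟩
        · exact ⟨h.mem_of htc htx, hzt, (h.cutle t htc htx).mp htw⟩
    unfold mQ
    rw [hset]
    exact ncard_swap_insert (finite_trace hd hsc hc hzw) (mem_trace' h.hx hzw) (fun hm => h.hy' hm.1)
  · rw [if_neg hzx, if_neg hwx]
    by_cases hxin : z ≤ x ∧ x ≤ w
    · have hset : c' ∩ Set.Icc z w = insert y ((c ∩ Set.Icc z w) \ {x}) := by
        ext t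
        constructor
        · rintro ⟨ht', hzt, htw⟩
          rcases h.mem_iff.mp ht' with rfl | ⟨htc, htx⟩
          · exact Set.mem_insert _ _
          · exact Set.mem_insert_of_mem _ ⟨⟨htc, hzt, htw⟩, htx⟩
        · rintro (rfl | ⟨⟨htc, hzt, htw⟩, htx⟩)
          · exact ⟨h.hy, (h.cutle z hz hzx).mp hxin.1, (h.cutge w hw hwx).mp hxin.2⟩
          · exact ⟨h.mem_of htc htx, hzt, htw⟩
      unfold mQ
      rw [hset]
      exact ncard_swap_insert (finite_trace hd hsc hc hzw)
        ⟨h.hx, hxin.1, hxin.2⟩ (fun hm => h.hy' hm.1)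
    · have hset : c' ∩ Set.Icc z w = c ∩ Set.Icc z w := by
        ext t
        constructor
        · rintro ⟨ht', hzt, htw⟩
          rcases h.mem_iff.mp ht' with rfl | ⟨htc, htx⟩
          · exact absurd ⟨(h.cutle z hz hzx).mpr hzt, (h.cutge w hw hwx).mpr htw⟩ hxin
          · exact ⟨htc, hzt, htw⟩
        · rintro ⟨htc, hzt, htw⟩
          rcases eq_or_ne t x with rfl | htx
          · exact absurd ⟨hzt, htw⟩ hxin
          · exact ⟨h.mem_of htc htx, hzt, htw⟩
      unfold mQ
      rw [hset]

/-- a swap path of maximal chains -/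
def IsSwapPath (f : ℕ → Set α) (n : ℕ) : Prop :=
  (∀ i ≤ n, IsMaxChain (· ≤ ·) (f i)) ∧ ∀ i < n, (symmDiff (f i) (f (i + 1))).ncard = 2

lemma IsSwapPath.swap {f : ℕ → Set α} {n : ℕ} (hp : IsSwapPath f n) {i : ℕ} (hi : i < n) :
    ∃ x y, SwapData (f i) (f (i + 1)) x y :=
  swap_spec (hp.1 i hi.le) (hp.1 (i + 1) hi) (hp.2 i hi)

/-- transport of an element along a swap path -/
noncomputable def trans (f : ℕ → Set α) : ℕ → α → α
  | 0 => id
  | i + 1 => fun z => stepEl (f i) (f (i + 1)) (trans f i z)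

@[simp] lemma trans_zero {f : ℕ → Set α} {z : α} : trans f 0 z = z := rfl

lemma trans_succ {f : ℕ → Set α} {i : ℕ} {z : α} :
    trans f (i + 1) z = stepEl (f i) (f (i + 1)) (trans f i z) := rfl

lemma trans_mem {f : ℕ → Set α} {n : ℕ} (hp : IsSwapPath f n) {z : α} (hz : z ∈ f 0) :
    ∀ i ≤ n, trans f i z ∈ f i := by
  intro i
  induction i with
  | zero => intro _; exact hz
  | succ i ih =>
    intro hi
    obtain ⟨x, y, hsw⟩ := hp.swap (Nat.lt_of_succ_le hi)
    rw [trans_succ]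
    exact stepEl_mem hsw (ih (Nat.le_of_succ_le hi))

lemma trans_le_iff {f : ℕ → Set α} {n : ℕ} (hp : IsSwapPath f n) {z w : α} (hz : z ∈ f 0)
    (hw : w ∈ f 0) : ∀ i ≤ n, (z ≤ w ↔ trans f i z ≤ trans f i w) := by
  intro i
  induction i with
  | zero => intro _; rfl
  | succ i ih =>
    intro hi
    obtain ⟨x, y, hsw⟩ := hp.swap (Nat.lt_of_succ_le hi)
    rw [trans_succ, trans_succ]
    rw [ih (Nat.le_of_succ_le hi)]
    exact stepEl_le_iff hsw (trans_mem hp hz i (Nat.le_of_succ_le hi))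
      (trans_mem hp hw i (Nat.le_of_succ_le hi))

lemma trans_inj {f : ℕ → Set α} {n : ℕ} (hp : IsSwapPath f n) {z w : α} (hz : z ∈ f 0)
    (hw : w ∈ f 0) {i : ℕ} (hi : i ≤ n) (he : trans f i z = trans f i w) : z = w := by
  have h1 : z ≤ w := (trans_le_iff hp hz hw i hi).mpr (he ▸ le_refl _)
  have h2 : w ≤ z := (trans_le_iff hp hw hz i hi).mpr (he ▸ le_refl _)
  exact le_antisymm h1 h2

lemma trans_fix {f : ℕ → Set α} {z : α} :
    ∀ i, (∀ j ≤ i, z ∈ f j) → trans f i z = z := by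
  intro i
  induction i with
  | zero => intro _; rfl
  | succ i ih =>
    intro hj
    rw [trans_succ, ih (fun j hji => hj j (hji.trans (Nat.le_succ i)))]
    exact stepEl_id (hj (i + 1) (le_refl _))

lemma trans_congr {f g : ℕ → Set α} {z : α} :
    ∀ i, (∀ j ≤ i, f j = g j) → trans f i z = trans g i z := by
  intro i
  induction i with
  | zero => intro _; rfl
  | succ i ih =>
    intro hj
    rw [trans_succ, trans_succ, ih (fun j hji => hj j (hji.trans (Nat.le_succ i))),
      hj i (Nat.le_succ i), hj (i + 1) (le_refl _)]

include hd hsc in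
lemma trans_mQ {f : ℕ → Set α} {n : ℕ} (hp : IsSwapPath f n) {z w : α} (hz : z ∈ f 0)
    (hw : w ∈ f 0) (hzw : z ≤ w) : ∀ i ≤ n, mQ (f i) (trans f i z) (trans f i w) = mQ (f 0) z w := by
  intro i
  induction i with
  | zero => intro _; rfl
  | succ i ih =>
    intro hi
    obtain ⟨x, y, hsw⟩ := hp.swap (Nat.lt_of_succ_le hi)
    rw [trans_succ, trans_succ, ← ih (Nat.le_of_succ_le hi)]
    exact stepEl_mQ hd hsc (hp.1 i (Nat.le_of_succ_le hi)) (hp.1 (i + 1) hi) hsw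
      (trans_mem hp hz i (Nat.le_of_succ_le hi)) (trans_mem hp hw i (Nat.le_of_succ_le hi))
      ((trans_le_iff hp hz hw i (Nat.le_of_succ_le hi)).mp hzw)

lemma rev_path {f : ℕ → Set α} {n : ℕ} (hp : IsSwapPath f n) :
    IsSwapPath (fun i => f (n - i)) n := by
  constructor
  · intro i _
    exact hp.1 (n - i) (Nat.sub_le n i)
  · intro i hi
    show (symmDiff (f (n - i)) (f (n - (i + 1)))).ncard = 2
    have h1 : n - i = (n - (i + 1)) + 1 := by omega
    rw [h1, symmDiff_comm]
    exact hp.2 (n - (i + 1)) (by omega)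

lemma trans_rev {f : ℕ → Set α} {n : ℕ} (hp : IsSwapPath f n) {z : α} (hz : z ∈ f 0) :
    ∀ j ≤ n, trans (fun i => f (n - i)) j (trans f n z) = trans f (n - j) z := by
  intro j
  induction j with
  | zero => intro _; simp
  | succ j ih =>
    intro hj
    rw [trans_succ, ih (Nat.le_of_succ_le hj)]
    have h1 : n - j = (n - (j + 1)) + 1 := by omega
    set k := n - (j + 1) with hk
    obtain ⟨x, y, hsw⟩ := hp.swap (i := k) (by omega)
    have hmem : trans f k z ∈ f k := trans_mem hp hz _ (by omega)
    show stepEl (f (n - j)) (f (n - (j + 1))) (trans f (n - j) z) = trans f (n - (j + 1)) z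
    rw [← hk, h1, trans_succ]
    exact stepEl_inv hsw hmem

lemma trans_rev_inv {f : ℕ → Set α} {n : ℕ} (hp : IsSwapPath f n) {z : α} (hz : z ∈ f 0) :
    trans (fun i => f (n - i)) n (trans f n z) = z := by
  have := trans_rev hp hz n (le_refl n)
  simpa using this

lemma trans_surj {f : ℕ → Set α} {n : ℕ} (hp : IsSwapPath f n) {w : α} (hw : w ∈ f n) :
    ∃ z ∈ f 0, trans f n z = w := by
  set g : ℕ → Set α := fun i => f (n - i) with hg
  have hpg : IsSwapPath g n := rev_path hp
  have hwg : w ∈ g 0 := by simpa [hg]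
  refine ⟨trans g n w, ?_, ?_⟩
  · have := trans_mem hpg hwg n (le_refl n)
    simpa [hg] using this
  · have := trans_rev_inv hpg hwg
    have hcong : trans (fun i => g (n - i)) n (trans g n w) = trans f n (trans g n w) := by
      apply trans_congr
      intro j hj
      simp only [hg]
      have hjj : n - (n - j) = j := by omega
      rw [hjj]
    rw [hcong] at this
    exact this

lemma exists_unmoved {f : ℕ → Set α} {n : ℕ} (hp : IsSwapPath f n) {B : Set α}
    (hB : B ⊆ f 0) (hinf : B.Infinite) : ∃ z ∈ B, ∀ i ≤ n, trans f i z = z := by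
  set U : Set α := ⋃ i ∈ Finset.range n, (f i \ f (i + 1)) with hU
  have hUfin : U.Finite := by
    apply Set.Finite.biUnion (Finset.range n).finite_toSet
    intro i hi
    have := symmdiff_finite (hp.2 i (Finset.mem_range.mp (by exact_mod_cast hi)))
    rw [Set.symmDiff_def] at this
    exact this.subset Set.subset_union_left
  obtain ⟨z, hzB, hzU⟩ : ∃ z ∈ B, z ∉ U := by
    have := (hinf.diff hUfin).nonempty
    obtain ⟨z, hz⟩ := this
    exact ⟨z, hz.1, hz.2⟩
  refine ⟨z, hzB, ?_⟩
  intro i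
  induction i with
  | zero => intro _; rfl
  | succ i ih =>
    intro hi
    have hih := ih (Nat.le_of_succ_le hi)
    rw [trans_succ, hih]
    have hzfi : z ∈ f i := by
      have := trans_mem hp (hB hzB) i (Nat.le_of_succ_le hi)
      rwa [hih] at this
    by_cases hz1 : z ∈ f (i + 1)
    · exact stepEl_id hz1
    · exact absurd (Set.mem_biUnion (Finset.mem_range.mpr (Nat.lt_of_succ_le hi))
        (⟨hzfi, hz1⟩ : z ∈ f i \ f (i + 1))) hzU

include hd hsc in
lemma monodromy {f : ℕ → Set α} {n : ℕ} (hp : IsSwapPath f n) (hloop : f n = f 0) :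
    ∀ v ∈ f 0, trans f n v = v := by
  intro v hv
  have hc : IsMaxChain (· ≤ ·) (f 0) := hp.1 0 (Nat.zero_le n)
  have hTmem : ∀ z ∈ f 0, trans f n z ∈ f 0 := fun z hz => hloop ▸ trans_mem hp hz n (le_refl n)
  -- find a fixed point
  have hfix : ∃ z₀ ∈ f 0, trans f n z₀ = z₀ := by
    by_cases hleast : ∃ u₀ ∈ f 0, ∀ w ∈ f 0, u₀ ≤ w
    · obtain ⟨u₀, hu₀, hleast⟩ := hleast
      refine ⟨u₀, hu₀, ?_⟩
      obtain ⟨z, hz, hzT⟩ := trans_surj hp (hloop.symm ▸ hu₀)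
      have h1 : trans f n u₀ ≤ trans f n z :=
        (trans_le_iff hp hu₀ hz n (le_refl n)).mp (hleast z hz)
      rw [hzT] at h1
      exact le_antisymm h1 (hleast _ (hTmem u₀ hu₀))
    · have hinf : (f 0).Infinite := by
        intro hfin
        obtain ⟨u₀, hu₀, hmin⟩ := fin_exists_minimal_wrt id (f 0) hfin ⟨v, hv⟩
        apply hleast
        refine ⟨u₀, hu₀, ?_⟩
        intro w hw
        rcases chain_cmp hc.1 hu₀ hw with h | h
        · exact h
        · exact le_of_eq (hmin w hw h)
      obtain ⟨z₀, hz₀, hall⟩ := exists_unmoved hp (le_refl (f 0)) hinf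
      exact ⟨z₀, hz₀, hall n (le_refl n)⟩
  obtain ⟨z₀, hz₀, hz₀fix⟩ := hfix
  have hmQ : mQ (f 0) (trans f n z₀) (trans f n v) = mQ (f 0) z₀ v ∨
      mQ (f 0) (trans f n v) (trans f n z₀) = mQ (f 0) v z₀ := by
    rcases chain_cmp hc.1 hz₀ hv with h | h
    · exact Or.inl (by rw [← hloop] at hTmem ⊢; exact hloop ▸ trans_mQ hd hsc hp hz₀ hv h n (le_refl n))
    · exact Or.inr (hloop ▸ trans_mQ hd hsc hp hv hz₀ h n (le_refl n))
  rcases chain_cmp hc.1 hz₀ hv with h | h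
  · have hm : mQ (f 0) z₀ (trans f n v) = mQ (f 0) z₀ v := by
      have := trans_mQ hd hsc hp hz₀ hv h n (le_refl n)
      rw [hloop, hz₀fix] at this
      exact this
    have hle : z₀ ≤ trans f n v := by
      have := (trans_le_iff hp hz₀ hv n (le_refl n)).mp h
      rwa [hz₀fix] at this
    exact mQ_uniq_lower hd hsc hc hz₀ (hTmem v hv) hv hle h hm
  · have hm : mQ (f 0) (trans f n v) z₀ = mQ (f 0) v z₀ := by
      have := trans_mQ hd hsc hp hv hz₀ h n (le_refl n)
      rw [hloop, hz₀fix] at this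
      exact this
    have hle : trans f n v ≤ z₀ := by
      have := (trans_le_iff hp hv hz₀ n (le_refl n)).mp h
      rwa [hz₀fix] at this
    exact mQ_uniq_upper hd hsc hc hz₀ (hTmem v hv) hv hle h hm

include hd hsc in
lemma trans_indep {f g : ℕ → Set α} {n m : ℕ} (hpf : IsSwapPath f n) (hpg : IsSwapPath g m)
    (h00 : f 0 = g 0) (hnm : f n = g m) : ∀ v ∈ f 0, trans f n v = trans g m v := by
  intro v hv
  -- reverse of g
  set g' : ℕ → Set α := fun i => g (m - i) with hg'
  have hpg' : IsSwapPath g' m := rev_path hpg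
  -- concatenated loop
  set h : ℕ → Set α := fun i => if i ≤ n then f i else g' (i - n) with hh
  have hagree : ∀ j ≤ n, h j = f j := by
    intro j hj
    simp only [hh]
    rw [if_pos hj]
  have hbound : ∀ j, 1 ≤ j → j ≤ m → h (n + j) = g' j := by
    intro j h1 h2
    simp only [hh]
    rw [if_neg (by omega)]
    have hnj : n + j - n = j := by omega
    rw [hnj]
  have hbound0 : h (n + 0) = g' 0 := by
    simp only [hh]
    rw [if_pos (by omega)]
    show f n = g (m - 0)
    simpa using hnm
  have hball : ∀ j ≤ m, h (n + j) = g' j := by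
    intro j hj
    rcases Nat.eq_zero_or_pos j with rfl | hpos
    · exact hbound0
    · exact hbound j hpos hj
  have hploop : IsSwapPath h (n + m) := by
    constructor
    · intro i hi
      by_cases hin : i ≤ n
      · rw [hagree i hin]
        exact hpf.1 i hin
      · have : h i = g' (i - n) := by
          have := hball (i - n) (by omega)
          rwa [show n + (i - n) = i by omega] at this
        rw [this]
        exact hpg'.1 (i - n) (by omega)
    · intro i hi
      by_cases hin : i + 1 ≤ n
      · rw [hagree i (by omega), hagree (i + 1) hin]
        exact hpf.2 i (by omega)
      · have hilow : n ≤ i := by omega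
        have e1 : h i = g' (i - n) := by
          have := hball (i - n) (by omega)
          rwa [show n + (i - n) = i by omega] at this
        have e2 : h (i + 1) = g' (i - n + 1) := by
          have := hball (i - n + 1) (by omega)
          rwa [show n + (i - n + 1) = i + 1 by omega] at this
        rw [e1, e2]
        exact hpg'.2 (i - n) (by omega)
  -- transport along the loop equals composition
  have hcomp : ∀ j ≤ m, trans h (n + j) v = trans g' j (trans f n v) := by
    intro j
    induction j with
    | zero =>
      intro _
      show trans h n v = trans g' 0 (trans f n v)
      rw [trans_zero]
      exact trans_congr n (fun j hj => hagree j hj)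
    | succ j ih =>
      intro hj
      show trans h (n + j + 1) v = trans g' (j + 1) (trans f n v)
      rw [trans_succ, trans_succ, ih (by omega)]
      rw [show n + j + 1 = n + (j + 1) by omega] at *
      rw [hball j (by omega), hball (j + 1) hj]
  have hloop : h (n + m) = h 0 := by
    rw [hagree 0 (Nat.zero_le n), hball m (le_refl m)]
    show g (m - m) = f 0
    rw [Nat.sub_self, h00]
  have hmono := monodromy hd hsc hploop (hloop) v (by rw [hagree 0 (Nat.zero_le n)]; exact hv)
  rw [hcomp m (le_refl m)] at hmono
  -- also reverse of g kills trans g m v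
  have hginv : trans g' m (trans g m v) = v := trans_rev_inv hpg (h00 ▸ hv)
  -- injectivity of trans g' m on g' 0 = g m
  have hmem1 : trans f n v ∈ g' 0 := by
    show trans f n v ∈ g (m - 0)
    simp only [Nat.sub_zero]
    exact hnm ▸ trans_mem hpf hv n (le_refl n)
  have hmem2 : trans g m v ∈ g' 0 := by
    show trans g m v ∈ g (m - 0)
    simp only [Nat.sub_zero]
    exact trans_mem hpg (h00 ▸ hv) m (le_refl m)
  apply trans_inj hpg' hmem1 hmem2 (le_refl m)
  rw [hmono, hginv]

lemma concat_path {f g : ℕ → Set α} {n m : ℕ} (hpf : IsSwapPath f n) (hpg : IsSwapPath g m)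
    (hmid : f n = g 0) :
    ∃ h : ℕ → Set α, IsSwapPath h (n + m) ∧ h 0 = f 0 ∧ h (n + m) = g m ∧
      ∀ v ∈ f 0, trans h (n + m) v = trans g m (trans f n v) := by
  set h : ℕ → Set α := fun i => if i ≤ n then f i else g (i - n) with hh
  have hagree : ∀ j ≤ n, h j = f j := by
    intro j hj
    simp only [hh]
    rw [if_pos hj]
  have hball : ∀ j ≤ m, h (n + j) = g j := by
    intro j hj
    rcases Nat.eq_zero_or_pos j with rfl | hpos
    · simp only [hh]
      rw [if_pos (by omega)]
      show f n = g 0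
      exact hmid
    · simp only [hh]
      rw [if_neg (by omega)]
      have hnj : n + j - n = j := by omega
      rw [hnj]
  have hploop : IsSwapPath h (n + m) := by
    constructor
    · intro i hi
      by_cases hin : i ≤ n
      · rw [hagree i hin]
        exact hpf.1 i hin
      · have heq : h i = g (i - n) := by
          have := hball (i - n) (by omega)
          rwa [show n + (i - n) = i by omega] at this
        rw [heq]
        exact hpg.1 (i - n) (by omega)
    · intro i hi
      by_cases hin : i + 1 ≤ n
      · rw [hagree i (by omega), hagree (i + 1) hin]
        exact hpf.2 i (by omega)
      · have hilow : n ≤ i := by omega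
        have e1 : h i = g (i - n) := by
          have := hball (i - n) (by omega)
          rwa [show n + (i - n) = i by omega] at this
        have e2 : h (i + 1) = g (i - n + 1) := by
          have := hball (i - n + 1) (by omega)
          rwa [show n + (i - n + 1) = i + 1 by omega] at this
        rw [e1, e2]
        exact hpg.2 (i - n) (by omega)
  refine ⟨h, hploop, hagree 0 (Nat.zero_le n), hball m (le_refl m), ?_⟩
  intro v hv
  have hcomp : ∀ j ≤ m, trans h (n + j) v = trans g j (trans f n v) := by
    intro j
    induction j with
    | zero =>
      intro _
      show trans h n v = trans g 0 (trans f n v)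
      rw [trans_zero]
      exact trans_congr n (fun j hj => hagree j hj)
    | succ j ih =>
      intro hj
      show trans h (n + j + 1) v = trans g (j + 1) (trans f n v)
      rw [trans_succ, trans_succ, ih (by omega)]
      rw [show n + j + 1 = n + (j + 1) by omega] at *
      rw [hball j (by omega), hball (j + 1) hj]
  exact hcomp m (le_refl m)

lemma mid_chain {c d : Set α} (hc : IsMaxChain (· ≤ ·) c) (hdm : IsMaxChain (· ≤ ·) d)
    {v : α} (hvc : v ∈ c) (hvd : v ∈ d) :
    IsMaxChain (· ≤ ·) ({z ∈ c | z ≤ v} ∪ {z ∈ d | v ≤ z}) ∧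
    ({z ∈ c | z ≤ v} ∪ {z ∈ d | v ≤ z}) ∩ Set.Iic v = c ∩ Set.Iic v ∧
    ({z ∈ c | z ≤ v} ∪ {z ∈ d | v ≤ z}) ∩ Set.Ici v = d ∩ Set.Ici v := by
  set e : Set α := {z ∈ c | z ≤ v} ∪ {z ∈ d | v ≤ z} with he
  have hchain : IsChain (· ≤ ·) e := by
    rintro z (⟨hz, hzv⟩ | ⟨hz, hvz⟩) w (⟨hw, hwv⟩ | ⟨hw, hvw⟩) hne
    · exact hc.1 hz hw hne
    · exact Or.inl (hzv.trans hvw)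
    · exact Or.inr (hwv.trans hvz)
    · exact hdm.1 hz hw hne
  have hkey : ∀ w, (∀ z ∈ e, w ≤ z ∨ z ≤ w) → w ∈ e := by
    intro w hw
    have hve : v ∈ e := Or.inl ⟨hvc, le_refl v⟩
    rcases hw v hve with hwv | hvw
    · -- w ≤ v : w is comparable to everything in c
      have hwc : w ∈ c := by
        apply mem_of_comp hc
        intro t ht
        rcases chain_cmp hc.1 ht hvc with htv | hvt
        · exact hw t (Or.inl ⟨ht, htv⟩)
        · exact Or.inl (hwv.trans hvt)
      exact Or.inl ⟨hwc, hwv⟩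
    · -- v ≤ w : w is comparable to everything in d
      have hwd : w ∈ d := by
        apply mem_of_comp hdm
        intro t ht
        rcases chain_cmp hdm.1 ht hvd with htv | hvt
        · exact Or.inr (htv.trans hvw)
        · exact hw t (Or.inr ⟨ht, hvt⟩)
      exact Or.inr ⟨hwd, hvw⟩
  refine ⟨⟨hchain, ?_⟩, ?_, ?_⟩
  · intro t ht hsub
    apply Set.Subset.antisymm hsub
    intro w hwt
    apply hkey w
    intro z hz
    rcases chain_cmp ht hwt (hsub hz) with h1 | h1
    · exact Or.inl h1
    · exact Or.inr h1
  · ext t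
    constructor
    · rintro ⟨(⟨ht, _⟩ | ⟨ht, hvt⟩), htv⟩
      · exact ⟨ht, htv⟩
      · have : t = v := le_antisymm htv hvt
        rw [this]
        exact ⟨hvc, le_refl v⟩
    · rintro ⟨ht, htv⟩
      exact ⟨Or.inl ⟨ht, htv⟩, htv⟩
  · ext t
    constructor
    · rintro ⟨(⟨ht, htv⟩ | ⟨ht, _⟩), hvt⟩
      · have : t = v := le_antisymm htv hvt
        rw [this]
        exact ⟨hvd, le_refl v⟩
      · exact ⟨ht, hvt⟩
    · rintro ⟨ht, hvt⟩
      exact ⟨Or.inr ⟨ht, hvt⟩, hvt⟩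

include hd hsc in
lemma rigid_low {c e : Set α} (hc : IsMaxChain (· ≤ ·) c) (he : IsMaxChain (· ≤ ·) e)
    {v : α} (hvc : v ∈ c) (hve : v ∈ e) (hlow : c ∩ Set.Iic v = e ∩ Set.Iic v)
    {f : ℕ → Set α} {n : ℕ} (hp : IsSwapPath f n) (h0 : f 0 = c) (hn : f n = e) :
    trans f n v = v := by
  subst h0
  -- find an anchor u ≤ v fixed by the transport
  obtain ⟨u, huc, huv, hufix⟩ : ∃ u, u ∈ f 0 ∧ u ≤ v ∧ trans f n u = u := by
    by_cases hBinf : (f 0 ∩ Set.Iic v).Infinite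
    · obtain ⟨z, hz, hall⟩ := exists_unmoved hp Set.inter_subset_left hBinf
      exact ⟨z, hz.1, hz.2, hall n (le_refl n)⟩
    · have hBfin : (f 0 ∩ Set.Iic v).Finite := Set.not_infinite.mp hBinf
      have hBne : (f 0 ∩ Set.Iic v).Nonempty := ⟨v, hvc, le_refl v⟩
      obtain ⟨u₀, hu₀, hmin⟩ := fin_exists_minimal_wrt id _ hBfin hBne
      -- u₀ is the least element of f 0
      have hleastB : ∀ w ∈ f 0 ∩ Set.Iic v, u₀ ≤ w := by
        intro w hw
        rcases chain_cmp hc.1 hu₀.1 hw.1 with h1 | h1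
        · exact h1
        · exact le_of_eq (hmin w hw h1)
      have hleastc : ∀ w ∈ f 0, u₀ ≤ w := by
        intro w hw
        rcases chain_cmp hc.1 hw hvc with h1 | h1
        · exact hleastB w ⟨hw, h1⟩
        · exact (hleastB v ⟨hvc, le_refl v⟩).trans h1
      have hu₀e : u₀ ∈ e := by
        have : u₀ ∈ e ∩ Set.Iic v := hlow ▸ hu₀
        exact this.1
      have hleaste : ∀ w ∈ e, u₀ ≤ w := by
        intro w hw
        rcases chain_cmp he.1 hw hve with h1 | h1
        · have : w ∈ f 0 ∩ Set.Iic v := hlow ▸ (⟨hw, h1⟩ : w ∈ e ∩ Set.Iic v)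
          exact hleastB w this
        · exact (hleastB v ⟨hvc, le_refl v⟩).trans h1
      refine ⟨u₀, hu₀.1, hu₀.2, ?_⟩
      have hTmem : trans f n u₀ ∈ e := hn ▸ trans_mem hp hu₀.1 n (le_refl n)
      obtain ⟨z, hz, hzT⟩ := trans_surj hp (hn.symm ▸ hu₀e)
      have h1 : trans f n u₀ ≤ trans f n z :=
        (trans_le_iff hp hu₀.1 hz n (le_refl n)).mp (hleastc z hz)
      rw [hzT] at h1
      exact le_antisymm h1 (hleaste _ hTmem)
  have hue : u ∈ e := by
    have : u ∈ e ∩ Set.Iic v := hlow ▸ (⟨huc, huv⟩ : u ∈ f 0 ∩ Set.Iic v)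
    exact this.1
  -- interval trace below v agrees
  have hsets : f 0 ∩ Set.Icc u v = e ∩ Set.Icc u v := by
    ext t
    constructor
    · rintro ⟨htc, h1, h2⟩
      have : t ∈ e ∩ Set.Iic v := hlow ▸ (⟨htc, h2⟩ : t ∈ f 0 ∩ Set.Iic v)
      exact ⟨this.1, h1, h2⟩
    · rintro ⟨hte, h1, h2⟩
      have : t ∈ f 0 ∩ Set.Iic v := hlow.symm ▸ (⟨hte, h2⟩ : t ∈ e ∩ Set.Iic v)
      exact ⟨this.1, h1, h2⟩
  have hm : mQ e u (trans f n v) = mQ e u v := by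
    have h1 := trans_mQ hd hsc hp huc hvc huv n (le_refl n)
    rw [hn, hufix] at h1
    rw [h1]
    show mQ (f 0) u v = mQ e u v
    unfold mQ
    rw [hsets]
  have hle : u ≤ trans f n v := by
    have := (trans_le_iff hp huc hvc n (le_refl n)).mp huv
    rwa [hufix] at this
  exact mQ_uniq_lower hd hsc he hue (hn ▸ trans_mem hp hvc n (le_refl n)) hve hle huv hm

include hd hsc in
lemma rigid_high {c e : Set α} (hc : IsMaxChain (· ≤ ·) c) (he : IsMaxChain (· ≤ ·) e)
    {v : α} (hvc : v ∈ c) (hve : v ∈ e) (hhigh : c ∩ Set.Ici v = e ∩ Set.Ici v)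
    {f : ℕ → Set α} {n : ℕ} (hp : IsSwapPath f n) (h0 : f 0 = c) (hn : f n = e) :
    trans f n v = v := by
  subst h0
  obtain ⟨u, huc, huv, hufix⟩ : ∃ u, u ∈ f 0 ∧ v ≤ u ∧ trans f n u = u := by
    by_cases hBinf : (f 0 ∩ Set.Ici v).Infinite
    · obtain ⟨z, hz, hall⟩ := exists_unmoved hp Set.inter_subset_left hBinf
      exact ⟨z, hz.1, hz.2, hall n (le_refl n)⟩
    · have hBfin : (f 0 ∩ Set.Ici v).Finite := Set.not_infinite.mp hBinf
      have hBne : (f 0 ∩ Set.Ici v).Nonempty := ⟨v, hvc, le_refl v⟩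
      obtain ⟨u₀, hu₀, hmax⟩ := fin_exists_maximal_wrt id _ hBfin hBne
      have hgreatB : ∀ w ∈ f 0 ∩ Set.Ici v, w ≤ u₀ := by
        intro w hw
        rcases chain_cmp hc.1 hu₀.1 hw.1 with h1 | h1
        · exact le_of_eq (hmax w hw h1).symm
        · exact h1
      have hgreatc : ∀ w ∈ f 0, w ≤ u₀ := by
        intro w hw
        rcases chain_cmp hc.1 hw hvc with h1 | h1
        · exact h1.trans (hgreatB v ⟨hvc, le_refl v⟩)
        · exact hgreatB w ⟨hw, h1⟩
      have hu₀e : u₀ ∈ e := by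
        have : u₀ ∈ e ∩ Set.Ici v := hhigh ▸ hu₀
        exact this.1
      have hgreate : ∀ w ∈ e, w ≤ u₀ := by
        intro w hw
        rcases chain_cmp he.1 hw hve with h1 | h1
        · exact h1.trans (hgreatB v ⟨hvc, le_refl v⟩)
        · have : w ∈ f 0 ∩ Set.Ici v := hhigh ▸ (⟨hw, h1⟩ : w ∈ e ∩ Set.Ici v)
          exact hgreatB w this
      refine ⟨u₀, hu₀.1, hu₀.2, ?_⟩
      have hTmem : trans f n u₀ ∈ e := hn ▸ trans_mem hp hu₀.1 n (le_refl n)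
      obtain ⟨z, hz, hzT⟩ := trans_surj hp (hn.symm ▸ hu₀e)
      have h1 : trans f n z ≤ trans f n u₀ :=
        (trans_le_iff hp hz hu₀.1 n (le_refl n)).mp (hgreatc z hz)
      rw [hzT] at h1
      exact le_antisymm (hgreate _ hTmem) h1
  have hue : u ∈ e := by
    have : u ∈ e ∩ Set.Ici v := hhigh ▸ (⟨huc, huv⟩ : u ∈ f 0 ∩ Set.Ici v)
    exact this.1
  have hsets : f 0 ∩ Set.Icc v u = e ∩ Set.Icc v u := by
    ext t
    constructor
    · rintro ⟨htc, h1, h2⟩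
      have : t ∈ e ∩ Set.Ici v := hhigh ▸ (⟨htc, h1⟩ : t ∈ f 0 ∩ Set.Ici v)
      exact ⟨this.1, h1, h2⟩
    · rintro ⟨hte, h1, h2⟩
      have : t ∈ f 0 ∩ Set.Ici v := hhigh.symm ▸ (⟨hte, h1⟩ : t ∈ e ∩ Set.Ici v)
      exact ⟨this.1, h1, h2⟩
  have hm : mQ e (trans f n v) u = mQ e v u := by
    have h1 := trans_mQ hd hsc hp hvc huc huv n (le_refl n)
    rw [hn, hufix] at h1
    rw [h1]
    show mQ (f 0) v u = mQ e v u
    unfold mQ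
    rw [hsets]
  have hle : trans f n v ≤ u := by
    have := (trans_le_iff hp hvc huc n (le_refl n)).mp huv
    rwa [hufix] at this
  exact mQ_uniq_upper hd hsc he hue (hn ▸ trans_mem hp hvc n (le_refl n)) hve hle huv hm

include hd hsc in
lemma rigid {c d : Set α} (hc : IsMaxChain (· ≤ ·) c) (hdm : IsMaxChain (· ≤ ·) d)
    {v : α} (hvc : v ∈ c) (hvd : v ∈ d) {f : ℕ → Set α} {n : ℕ} (hp : IsSwapPath f n)
    (h0 : f 0 = c) (hn : f n = d) : trans f n v = v := by
  obtain ⟨hemc, hlow, hhigh⟩ := mid_chain hc hdm hvc hvd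
  set e : Set α := {z ∈ c | z ≤ v} ∪ {z ∈ d | v ≤ z} with hedef
  have hve : v ∈ e := Or.inl ⟨hvc, le_refl v⟩
  obtain ⟨n1, f1, hf10, hf1n, hmax1, hsw1⟩ := hsc c e hc hemc
  obtain ⟨n2, f2, hf20, hf2n, hmax2, hsw2⟩ := hsc e d hemc hdm
  have hp1 : IsSwapPath f1 n1 := ⟨hmax1, hsw1⟩
  have hp2 : IsSwapPath f2 n2 := ⟨hmax2, hsw2⟩
  obtain ⟨h, hph, hh0, hhnm, hhtrans⟩ := concat_path hp1 hp2 (by rw [hf1n, hf20])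
  have hindep := trans_indep hd hsc hp hph (by rw [h0, hh0, hf10]) (by rw [hn, hhnm, hf2n]) v (by rw [h0]; exact hvc)
  rw [hindep, hhtrans v (by rw [hf10]; exact hvc)]
  have hr1 : trans f1 n1 v = v :=
    rigid_low hd hsc hc hemc hvc hve hlow.symm hp1 hf10 hf1n
  rw [hr1]
  exact rigid_high hd hsc hemc hdm hve hvd hhigh hp2 hf20 hf2n

end DSCG

open DSCG

/-- A discrete strongly connected poset admits an R-grading (R ⊆ ℤ), and its antichain
cutsets are exactly the level sets of that grading. -/
theorem discrete_stronglyConnected_graded_cutsets {α : Type*} [PartialOrder α]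
    (hd : DiscretePoset α) (hsc : StronglyConnectedOrder α) :
    ∃ (R : Set ℤ) (ρ : α → ℤ), (∀ x, ρ x ∈ R) ∧
      (∀ c : Set α, IsMaxChain (· ≤ ·) c →
        (∀ x ∈ c, ∀ y ∈ c, x ≤ y ↔ ρ x ≤ ρ y) ∧ ∀ r ∈ R, ∃ x ∈ c, ρ x = r) ∧
      ∀ A : Set α, IsAntichainCutset A ↔ ∃ r ∈ R, A = {x | ρ x = r} ∧ A.Nonempty := by
  classical
  rcases isEmpty_or_nonempty α with hemp | hne
  · -- empty poset
    refine ⟨∅, fun _ => 0, ?_, ?_, ?_⟩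
    · exact fun x => isEmptyElim x
    · intro c _
      constructor
      · intro x hx; exact isEmptyElim x
      · intro r hr; exact absurd hr (Set.notMem_empty r)
    · intro A
      constructor
      · intro hA
        have hmax : IsMaxChain (· ≤ ·) (∅ : Set α) := by
          constructor
          · exact IsChain.empty
          · intro t _ _
            ext z; exact isEmptyElim z
        obtain ⟨x, _, _⟩ := hA ∅ hmax
        exact isEmptyElim x
      · rintro ⟨r, hr, _⟩
        exact absurd hr (Set.notMem_empty r)
  · -- nonempty poset
    obtain ⟨a⟩ := hne
    obtain ⟨c₀, hc₀, hac₀'⟩ := (IsChain.singleton : IsChain (· ≤ ·) ({a} : Set α)).exists_maxChain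
    have hac₀ : a ∈ c₀ := hac₀' rfl
    -- the base labeling
    set ℓ : α → ℤ := fun z => if a ≤ z then ((mQ c₀ a z : ℤ) - 1) else (1 - (mQ c₀ z a : ℤ))
      with hℓdef
    have hℓiff : ∀ z ∈ c₀, ∀ w ∈ c₀, (z ≤ w ↔ ℓ z ≤ ℓ w) := by
      intro z hz w hw
      by_cases haz : a ≤ z <;> by_cases haw : a ≤ w <;>
        simp only [hℓdef, if_pos, if_neg, haz, haw, if_true, if_false]
      · constructor
        · intro hzw
          have h1 := mQ_add hd hsc hc₀ hz haz hzw
          have h2 := mQ_pos hd hsc hc₀ hz hzw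
          omega
        · intro hint
          rcases chain_cmp hc₀.1 hz hw with h | h
          · exact h
          · rcases eq_or_ne w z with rfl | hne
            · exact le_rfl
            · have h1 := mQ_add hd hsc hc₀ hw haw h
              have h2 := mQ_two hd hsc hc₀ hw hz h hne
              omega
      · -- a ≤ z, ¬ a ≤ w : w < a
        have hwa : w ≤ a := by
          rcases chain_cmp hc₀.1 hw hac₀ with h | h
          · exact h
          · exact absurd h haw
        have hwna : w ≠ a := fun h => haw (le_of_eq h.symm)
        have h2 := mQ_two hd hsc hc₀ hw hac₀ hwa hwna
        have h3 := mQ_pos hd hsc hc₀ hac₀ haz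
        constructor
        · intro hzw
          exact absurd (haz.trans hzw) haw
        · intro hint
          omega
      · -- ¬ a ≤ z, a ≤ w
        have hza : z ≤ a := by
          rcases chain_cmp hc₀.1 hz hac₀ with h | h
          · exact h
          · exact absurd h haz
        have h2 := mQ_pos hd hsc hc₀ hz hza
        have h3 := mQ_pos hd hsc hc₀ hac₀ haw
        constructor
        · intro _
          omega
        · intro _
          exact hza.trans haw
      · -- both below a
        have hza : z ≤ a := by
          rcases chain_cmp hc₀.1 hz hac₀ with h | h
          · exact h
          · exact absurd h haz
        have hwa : w ≤ a := by
          rcases chain_cmp hc₀.1 hw hac₀ with h | h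
          · exact h
          · exact absurd h haw
        constructor
        · intro hzw
          have h1 := mQ_add hd hsc hc₀ hw hzw hwa
          have h2 := mQ_pos hd hsc hc₀ hz hzw
          omega
        · intro hint
          rcases chain_cmp hc₀.1 hz hw with h | h
          · exact h
          · rcases eq_or_ne w z with rfl | hne
            · exact le_rfl
            · have h1 := mQ_add hd hsc hc₀ hz h hza
              have h2 := mQ_two hd hsc hc₀ hw hz h hne
              omega
    -- chain through each element
    have hch : ∀ v : α, ∃ cv, IsMaxChain (· ≤ ·) cv ∧ v ∈ cv := by
      intro v
      obtain ⟨cv, hcv, hsub⟩ := (IsChain.singleton : IsChain (· ≤ ·) ({v} : Set α)).exists_maxChain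
      exact ⟨cv, hcv, hsub rfl⟩
    choose cv hcv hvcv using hch
    have hpathex : ∀ v : α, ∃ (n : ℕ) (f : ℕ → Set α),
        IsSwapPath f n ∧ f 0 = cv v ∧ f n = c₀ := by
      intro v
      obtain ⟨n, f, h0, hn, hm, hs⟩ := hsc (cv v) c₀ (hcv v) hc₀
      exact ⟨n, f, ⟨hm, hs⟩, h0, hn⟩
    choose pn pf hpsp hp0 hpn using hpathex
    set ρ : α → ℤ := fun v => ℓ (trans (pf v) (pn v) v) with hρdef
    set R : Set ℤ := ℓ '' c₀ with hRdef
    have htransmem : ∀ v : α, trans (pf v) (pn v) v ∈ c₀ := by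
      intro v
      have := trans_mem (hpsp v) (by rw [hp0 v]; exact hvcv v) (pn v) (le_refl _)
      rwa [hpn v] at this
    have hρR : ∀ v, ρ v ∈ R := fun v => ⟨trans (pf v) (pn v) v, htransmem v, rfl⟩
    -- coherence : any path from a chain containing v to c₀ computes ρ v
    have hcoh : ∀ (c : Set α), IsMaxChain (· ≤ ·) c → ∀ v ∈ c, ∀ (g : ℕ → Set α) (m : ℕ),
        IsSwapPath g m → g 0 = c → g m = c₀ → ℓ (trans g m v) = ρ v := by
      intro c hcm v hvc g m hpg hg0 hgm
      obtain ⟨nr, r, hr0, hrn, hrm, hrs⟩ := hsc c (cv v) hcm (hcv v)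
      have hpr : IsSwapPath r nr := ⟨hrm, hrs⟩
      obtain ⟨h, hph, hh0, hhnm, hhtr⟩ := concat_path hpr (hpsp v) (by rw [hrn, hp0 v])
      have hindep := trans_indep hd hsc hpg hph (by rw [hg0, hh0, hr0])
        (by rw [hgm, hhnm, hpn v]) v (by rw [hg0]; exact hvc)
      rw [hindep, hhtr v (by rw [hr0]; exact hvc)]
      rw [rigid hd hsc hcm (hcv v) hvc (hvcv v) hpr hr0 hrn]
    -- the per-chain grading properties
    have hPer : ∀ c : Set α, IsMaxChain (· ≤ ·) c →
        (∀ u ∈ c, ∀ v ∈ c, (u ≤ v ↔ ρ u ≤ ρ v)) ∧ ∀ r ∈ R, ∃ x ∈ c, ρ x = r := by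
      intro c hcm
      obtain ⟨m, q, hq0, hqm, hqmax, hqsw⟩ := hsc c₀ c hc₀ hcm
      have hpq : IsSwapPath q m := ⟨hqmax, hqsw⟩
      set g : ℕ → Set α := fun i => q (m - i) with hgdef
      have hpg : IsSwapPath g m := rev_path hpq
      have hg0 : g 0 = c := by simp only [hgdef, Nat.sub_zero]; exact hqm
      have hgm : g m = c₀ := by simp only [hgdef, Nat.sub_self]; exact hq0
      constructor
      · intro u hu v hv
        rw [← hcoh c hcm u hu g m hpg hg0 hgm, ← hcoh c hcm v hv g m hpg hg0 hgm]
        have h1 := trans_le_iff hpg (by rw [hg0]; exact hu) (by rw [hg0]; exact hv) m (le_refl m)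
        rw [h1]
        apply hℓiff
        · have := trans_mem hpg (by rw [hg0]; exact hu) m (le_refl m)
          rwa [hgm] at this
        · have := trans_mem hpg (by rw [hg0]; exact hv) m (le_refl m)
          rwa [hgm] at this
      · rintro r ⟨z, hzc₀, rfl⟩
        set x : α := trans q m z with hxdef
        have hxc : x ∈ c := by
          have := trans_mem hpq (by rw [hq0]; exact hzc₀) m (le_refl m)
          rwa [hqm] at this
        refine ⟨x, hxc, ?_⟩
        rw [← hcoh c hcm x hxc g m hpg hg0 hgm]
        have hinv : trans g m (trans q m z) = z := trans_rev_inv hpq (by rw [hq0]; exact hzc₀)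
        rw [hxdef, hinv]
    -- ρ equality over a swap
    have hswapρ : ∀ c c' : Set α, IsMaxChain (· ≤ ·) c → IsMaxChain (· ≤ ·) c' →
        ∀ x y : α, SwapData c c' x y → ρ y = ρ x := by
      intro c c' hcm hcm' x y hsw
      obtain ⟨w, hwc, hwρ⟩ := (hPer c hcm).2 (ρ y) (hρR y)
      rcases eq_or_ne w x with rfl | hwx
      · exact hwρ.symm
      · have hwc' := hsw.mem_of hwc hwx
        have : w = y := by
          have hiff1 := (hPer c' hcm').1 w hwc' y hsw.hy
          have hiff2 := (hPer c' hcm').1 y hsw.hy w hwc'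
          exact le_antisymm (hiff1.mpr (le_of_eq hwρ)) (hiff2.mpr (le_of_eq hwρ.symm))
        exact absurd (this ▸ hwc) hsw.hy'
    refine ⟨R, ρ, hρR, fun c hcm => hPer c hcm, ?_⟩
    intro A
    constructor
    · -- antichain cutset is a level set
      intro hA
      obtain ⟨xb, ⟨hxbc₀, hxbA⟩, hxbu⟩ := hA c₀ hc₀
      refine ⟨ρ xb, hρR xb, ?_, ⟨xb, hxbA⟩⟩
      -- all elements of A have label ρ xb
      have hlevel : ∀ z ∈ A, ρ z = ρ xb := by
        intro z hzA
        obtain ⟨m, q, hq0, hqm, hqmax, hqsw⟩ := hsc c₀ (cv z) hc₀ (hcv z)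
        have hpq : IsSwapPath q m := ⟨hqmax, hqsw⟩
        have hind : ∀ i ≤ m, ∀ w, w ∈ q i → w ∈ A → ρ w = ρ xb := by
          intro i
          induction i with
          | zero =>
            intro _ w hwq hwA
            rw [hq0] at hwq
            rw [hxbu w ⟨hwq, hwA⟩]
          | succ i ih =>
            intro hi w hwq hwA
            obtain ⟨x, y, hsw⟩ := hpq.swap (Nat.lt_of_succ_le hi)
            rcases hsw.mem_iff.mp hwq with rfl | ⟨hwqi, hwx⟩
            · -- w = y, the new element
              obtain ⟨b, ⟨hbq, hbA⟩, hbu⟩ := hA (q i) (hqmax i (Nat.le_of_succ_le hi))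
              have hbρ : ρ b = ρ xb := ih (Nat.le_of_succ_le hi) b hbq hbA
              rcases eq_or_ne b x with rfl | hbx
              · rw [hswapρ (q i) (q (i + 1)) (hqmax i (Nat.le_of_succ_le hi))
                  (hqmax (i + 1) hi) b w hsw]
                exact hbρ
              · -- b survives into q (i+1); uniqueness there forces w = b
                have hbq1 : b ∈ q (i + 1) := hsw.mem_of hbq hbx
                obtain ⟨b', _, hb'u⟩ := hA (q (i + 1)) (hqmax (i + 1) hi)
                have e1 := hb'u w ⟨hwq, hwA⟩
                have e2 := hb'u b ⟨hbq1, hbA⟩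
                rw [e1, ← e2] at *
                exact hbρ
            · exact ih (Nat.le_of_succ_le hi) w hwqi hwA
        have hzq : z ∈ q m := by rw [hqm]; exact hvcv z
        exact hind m (le_refl m) z hzq hzA
      ext z
      simp only [Set.mem_setOf_eq]
      constructor
      · intro hzA
        exact hlevel z hzA
      · intro hzρ
        obtain ⟨w, ⟨hwc, hwA⟩, hwu⟩ := hA (cv z) (hcv z)
        have hwρ : ρ w = ρ xb := hlevel w hwA
        have : z = w := by
          have hiff1 := (hPer (cv z) (hcv z)).1 z (hvcv z) w hwc
          have hiff2 := (hPer (cv z) (hcv z)).1 w hwc z (hvcv z)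
          have h1 : ρ z ≤ ρ w := by rw [hzρ, hwρ]
          have h2 : ρ w ≤ ρ z := by rw [hzρ, hwρ]
          exact le_antisymm (hiff1.mpr h1) (hiff2.mpr h2)
        rw [this]
        exact hwA
    · -- a nonempty level set is an antichain cutset
      rintro ⟨r, hrR, rfl, hAne⟩
      intro c hcm
      obtain ⟨x, hxc, hxρ⟩ := (hPer c hcm).2 r hrR
      refine ⟨x, ⟨hxc, hxρ⟩, ?_⟩
      rintro w ⟨hwc, hwρ⟩
      have hiff1 := (hPer c hcm).1 w hwc x hxc
      have hiff2 := (hPer c hcm).1 x hxc w hwc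
      have h1 : ρ w ≤ ρ x := by rw [hxρ]; exact le_of_eq hwρ
      have h2 : ρ x ≤ ρ w := by rw [hxρ]; exact le_of_eq hwρ.symm
      exact le_antisymm (hiff1.mpr h1) (hiff2.mpr h2)
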